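/- Let 𝔡 be a finite-dimensional Lie algebra with invariant β ∈ S²𝔡, and let 𝔡*_β be the Lie algebra on 𝔡* with bracket ⟨[μ₁, μ₂], ξ⟩ = ⟨μ₂, [ξ, β^♯(μ₁)]⟩. Then the bilinear form β, viewed as a symmetric bilinear form on 𝔡*_β, is invariant under the bracket of 𝔡*_β: β([μ₁, μ₂], μ₃) + β(μ₂, [μ₁, μ₃]) = 0. -/
import Mathlib

open Module LieAlgebra

/-- Let `𝔡` be a finite-dimensional Lie algebra with invariant symmetric 2-tensor `β`,
represented by its sharp map `Bs : 𝔡* → 𝔡`, and let `br` be the bracket on `𝔡*_β`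
with `⟨[μ₁, μ₂], ξ⟩ = ⟨μ₂, [ξ, β^♯(μ₁)]⟩`.  Then `β`, viewed as the bilinear form
`β(μ, ν) = ⟨μ, β^♯(ν)⟩` on `𝔡*_β`, is invariant under this bracket:
`β([μ₁,μ₂],μ₃) + β(μ₂,[μ₁,μ₃]) = 0`. -/
theorem beta_invariant_under_dual_bracket {K D : Type*} [Field K]
    [LieRing D] [LieAlgebra K D] [FiniteDimensional K D]
    (Bs : Module.Dual K D →ₗ[K] D)
    (hsymm : ∀ μ ν : Module.Dual K D, μ (Bs ν) = ν (Bs μ))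
    (hinv : ∀ (ξ : D) (μ : Module.Dual K D),
      Bs (μ ∘ₗ LieAlgebra.ad K D ξ) = -⁅ξ, Bs μ⁆)
    (br : Module.Dual K D → Module.Dual K D → Module.Dual K D)
    (hbr : ∀ (μ₁ μ₂ : Module.Dual K D) (ξ : D), br μ₁ μ₂ ξ = μ₂ ⁅ξ, Bs μ₁⁆) :
    ∀ μ₁ μ₂ μ₃ : Module.Dual K D,
      (br μ₁ μ₂) (Bs μ₃) + μ₂ (Bs (br μ₁ μ₃)) = 0 := by
  intro μ₁ μ₂ μ₃
  have h1 : br μ₁ μ₃ = -(μ₃ ∘ₗ LieAlgebra.ad K D (Bs μ₁)) := by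
    apply LinearMap.ext
    intro ξ
    simp only [hbr, LinearMap.neg_apply, LinearMap.comp_apply, LieAlgebra.ad_apply,
      ← lie_skew (Bs μ₁) ξ, map_neg, neg_neg]
  have h2 : Bs (br μ₁ μ₃) = ⁅Bs μ₁, Bs μ₃⁆ := by
    rw [h1, map_neg, hinv]; simp
  rw [hbr, h2, ← lie_skew (Bs μ₁) (Bs μ₃), map_neg, add_neg_cancel]
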